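/- Under the same setup (p supported on two indices i₁, i₂ with positive components summing to 1), the fixed point equation Tp = p holds if and only if p⁽ⁱ¹⁾ = Ψ(λ_{i₂})/(Ψ(λ_{i₁}) + Ψ(λ_{i₂})) and p⁽ⁱ²⁾ = Ψ(λ_{i₁})/(Ψ(λ_{i₁}) + Ψ(λ_{i₂})). -/

import Mathlib

open Finset

noncomputable def gam {n : ℕ} (lam : Fin (n+1) → ℝ) (Psi : ℝ → ℝ) (p : Fin (n+1) → ℝ) : ℝ :=
  (∑ i, Psi (lam i) * lam i * p i) / (∑ i, Psi (lam i) * p i)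

noncomputable def Tmap {n : ℕ} (lam : Fin (n+1) → ℝ) (Psi : ℝ → ℝ) (p : Fin (n+1) → ℝ) :
    Fin (n+1) → ℝ :=
  fun i => (lam i - gam lam Psi p) ^ 2 * p i / ∑ j, (lam j - gam lam Psi p) ^ 2 * p j

noncomputable def Theta {n : ℕ} (lam : Fin (n+1) → ℝ) (Psi : ℝ → ℝ) (p : Fin (n+1) → ℝ) : ℝ :=
  (∑ i, Psi (lam i) * (lam i - gam lam Psi p) ^ 2 * p i) / (∑ i, Psi (lam i) * p i)
theorem Tmap_fixed_point_iff {n : ℕ} (lam : Fin (n+1) → ℝ) (Psi : ℝ → ℝ) (p : Fin (n+1) → ℝ)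
    (hmono : StrictMono lam) (hpos : 0 < lam 0)
    (hPsi : ∀ x ∈ Set.Icc (lam 0) (lam (Fin.last n)), 0 < Psi x)
    (i₁ i₂ : Fin (n+1)) (hne : i₁ ≠ i₂)
    (h1 : 0 < p i₁) (h2 : 0 < p i₂) (hsum : p i₁ + p i₂ = 1)
    (hzero : ∀ i, i ≠ i₁ → i ≠ i₂ → p i = 0) :
    Tmap lam Psi p = p ↔
      p i₁ = Psi (lam i₂) / (Psi (lam i₁) + Psi (lam i₂)) ∧
      p i₂ = Psi (lam i₁) / (Psi (lam i₁) + Psi (lam i₂)) := by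
  have hsum2 : ∀ f : Fin (n+1) → ℝ, (∑ i, f i * p i) = f i₁ * p i₁ + f i₂ * p i₂ := by
    intro f
    rw [← Finset.sum_subset (Finset.subset_univ ({i₁, i₂} : Finset (Fin (n+1))))]
    · rw [Finset.sum_pair hne]
    · intro x _ hx
      simp only [Finset.mem_insert, Finset.mem_singleton, not_or] at hx
      rw [hzero x hx.1 hx.2, mul_zero]
  have hP1 : 0 < Psi (lam i₁) :=
    hPsi _ ⟨hmono.monotone (Fin.zero_le i₁), hmono.monotone (Fin.le_last i₁)⟩
  have hP2 : 0 < Psi (lam i₂) :=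
    hPsi _ ⟨hmono.monotone (Fin.zero_le i₂), hmono.monotone (Fin.le_last i₂)⟩
  have hLne : lam i₁ ≠ lam i₂ := fun h => hne (hmono.injective h)
  have hSpos : 0 < Psi (lam i₁) * p i₁ + Psi (lam i₂) * p i₂ := by positivity
  have hγdef : gam lam Psi p =
      (Psi (lam i₁) * lam i₁ * p i₁ + Psi (lam i₂) * lam i₂ * p i₂) /
        (Psi (lam i₁) * p i₁ + Psi (lam i₂) * p i₂) := by
    unfold gam
    rw [hsum2 (fun i => Psi (lam i) * lam i), hsum2 (fun i => Psi (lam i))]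
  set γ := gam lam Psi p with hγ
  have hD : (∑ j, (lam j - γ) ^ 2 * p j) =
      (lam i₁ - γ) ^ 2 * p i₁ + (lam i₂ - γ) ^ 2 * p i₂ :=
    hsum2 (fun j => (lam j - γ) ^ 2)
  constructor
  · intro h
    have h₁ := congrFun h i₁
    have h₂ := congrFun h i₂
    simp only [Tmap, ← hγ, hD] at h₁ h₂
    set D := (lam i₁ - γ) ^ 2 * p i₁ + (lam i₂ - γ) ^ 2 * p i₂ with hDdef
    have hDne : D ≠ 0 := by
      intro h0
      rw [h0, div_zero] at h₁
      exact absurd h₁.symm (ne_of_gt h1)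
    have hc1 : (lam i₁ - γ) ^ 2 = D := by
      have h' := (div_eq_iff hDne).mp h₁
      have h'' : (lam i₁ - γ) ^ 2 * p i₁ = D * p i₁ := by linarith [mul_comm (p i₁) D]
      exact mul_right_cancel₀ (ne_of_gt h1) h''
    have hc2 : (lam i₂ - γ) ^ 2 = D := by
      have h' := (div_eq_iff hDne).mp h₂
      have h'' : (lam i₂ - γ) ^ 2 * p i₂ = D * p i₂ := by linarith [mul_comm (p i₂) D]
      exact mul_right_cancel₀ (ne_of_gt h2) h''
    have hfac : (lam i₁ - lam i₂) * (lam i₁ + lam i₂ - 2 * γ) = 0 := by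
      have h' := hc1.trans hc2.symm
      linear_combination h'
    have hγval : γ = (lam i₁ + lam i₂) / 2 := by
      rcases mul_eq_zero.mp hfac with h0 | h0
      · exact absurd (by linarith : lam i₁ = lam i₂) hLne
      · linarith
    have hkey : Psi (lam i₁) * p i₁ = Psi (lam i₂) * p i₂ := by
      have := hγdef
      rw [hγval] at this
      have h' : (lam i₁ + lam i₂) / 2 * (Psi (lam i₁) * p i₁ + Psi (lam i₂) * p i₂) =
          Psi (lam i₁) * lam i₁ * p i₁ + Psi (lam i₂) * lam i₂ * p i₂ := by
        rw [this]
        field_simp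
      have hfac2 : (lam i₁ - lam i₂) * (Psi (lam i₁) * p i₁ - Psi (lam i₂) * p i₂) = 0 := by
        linear_combination (-2) * h'
      rcases mul_eq_zero.mp hfac2 with h0 | h0
      · exact absurd (by linarith : lam i₁ = lam i₂) hLne
      · linarith
    have hPs : Psi (lam i₁) + Psi (lam i₂) ≠ 0 := by positivity
    constructor
    · rw [eq_div_iff hPs]; linear_combination hkey + Psi (lam i₂) * hsum
    · rw [eq_div_iff hPs]; linear_combination Psi (lam i₁) * hsum - hkey
  · rintro ⟨ha, hb⟩
    have hPs : Psi (lam i₁) + Psi (lam i₂) ≠ 0 := by positivity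
    have hγval : γ = (lam i₁ + lam i₂) / 2 := by
      rw [hγdef, ha, hb]
      field_simp
      ring
    have hDval : (∑ j, (lam j - γ) ^ 2 * p j) = ((lam i₁ - lam i₂) / 2) ^ 2 := by
      rw [hD, hγval]
      linear_combination ((lam i₁ - lam i₂) / 2) ^ 2 * hsum
    have hDne : ((lam i₁ - lam i₂) / 2) ^ 2 ≠ 0 := by
      have : lam i₁ - lam i₂ ≠ 0 := sub_ne_zero.mpr hLne
      positivity
    funext i
    simp only [Tmap, ← hγ, hDval]
    by_cases hi1 : i = i₁
    · subst hi1
      rw [hγval]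
      rw [div_eq_iff hDne]
      ring
    · by_cases hi2 : i = i₂
      · subst hi2
        rw [hγval]
        rw [div_eq_iff hDne]
        ring
      · rw [hzero i hi1 hi2, mul_zero, zero_div]
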